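/- For every n ≥ 1, the pair (F_{2n}, F_{2n+1}) of consecutive Fibonacci numbers is a P-position of Wythoff's game; moreover, these are the only P-positions of Wythoff's game with both entries positive in which one of the entries is a Fibonacci number. -/

import Mathlib

/-- A move in a CM-Nim game with permissible family `𝒮`: choose a permissible
(nonempty) set `S` of jars and a positive number `c` of cookies with `c ≤ p i`
for every `i ∈ S`, and take `c` cookies from each jar in `S`. -/
def CMMove {k : ℕ} (𝒮 : Set (Finset (Fin k))) (p q : Fin k → ℕ) : Prop :=
  ∃ S ∈ 𝒮, S.Nonempty ∧ ∃ c > 0, (∀ i ∈ S, c ≤ p i ∧ q i = p i - c) ∧ ∀ i ∉ S, q i = p i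

lemma CMMove.sum_lt {k : ℕ} {𝒮 : Set (Finset (Fin k))} {p q : Fin k → ℕ}
    (h : CMMove 𝒮 p q) : ∑ i, q i < ∑ i, p i := by
  obtain ⟨S, hS, ⟨i0, hi0⟩, c, hc, h1, h2⟩ := h
  apply Finset.sum_lt_sum
  · intro i _
    by_cases hi : i ∈ S
    · have := h1 i hi; omega
    · rw [h2 i hi]
  · exact ⟨i0, Finset.mem_univ _, by have := h1 i0 hi0; omega⟩

/-- P-positions of a CM-Nim game, defined by well-founded recursion on the
total number of cookies: a position is a P-position iff every move from it
leads to a position that is not a P-position. -/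
def CMPPos {k : ℕ} (𝒮 : Set (Finset (Fin k))) (p : Fin k → ℕ) : Prop :=
  ∀ q, CMMove 𝒮 p q → ¬ CMPPos 𝒮 q
termination_by ∑ i, p i
decreasing_by exact CMMove.sum_lt (by assumption)

/-- Nim with `k` piles: only singletons are permissible. -/
def NimSets (k : ℕ) : Set (Finset (Fin k)) := {S | ∃ i, S = {i}}

/-- Wythoff's game: the permissible sets are `{1}`, `{2}` and `{1,2}`. -/
def WythoffSets : Set (Finset (Fin 2)) := {{0}, {1}, {0, 1}}

/-- The index of the largest Fibonacci number not exceeding `n`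
(for `n ≥ 1` this index is at least `2`, matching the convention that the
Fibonacci number `1` is used with index `2`). -/
def greatestFibIdx (n : ℕ) : ℕ := Nat.findGreatest (fun i => Nat.fib i ≤ n) (n + 2)

lemma greatestFibIdx_le (n : ℕ) (hn : 0 < n) : Nat.fib (greatestFibIdx n) ≤ n :=
  Nat.findGreatest_spec (P := fun i => Nat.fib i ≤ n) (m := 2) (by omega) (by simp; omega)

lemma two_le_greatestFibIdx (n : ℕ) (hn : 0 < n) : 2 ≤ greatestFibIdx n :=
  Nat.le_findGreatest (P := fun i => Nat.fib i ≤ n) (by omega) (by simp; omega)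

/-- The Fibonacci successor `σ(n)`: replace each Fibonacci number in the
Zeckendorf representation of `n` (computed greedily: subtract the largest
Fibonacci number not greater than `n`, and repeat) with the next Fibonacci
number; `σ(0) = 0`. -/
def fibSucc (n : ℕ) : ℕ :=
  if hn : n = 0 then 0
  else Nat.fib (greatestFibIdx n + 1) + fibSucc (n - Nat.fib (greatestFibIdx n))
termination_by n
decreasing_by
  have h1 := greatestFibIdx_le n (by omega)
  have h2 := two_le_greatestFibIdx n (by omega)
  have h3 : 0 < Nat.fib (greatestFibIdx n) := Nat.fib_pos.mpr (by omega)
  omega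

lemma cmppos_iff {k : ℕ} (𝒮 : Set (Finset (Fin k))) (p : Fin k → ℕ) :
    CMPPos 𝒮 p ↔ ∀ q, CMMove 𝒮 p q → ¬ CMPPos 𝒮 q := by
  rw [CMPPos]

lemma vec_eta (q : Fin 2 → ℕ) : q = ![q 0, q 1] := by
  funext i; fin_cases i <;> simp

lemma wmove_iff {x y : ℕ} {q : Fin 2 → ℕ} :
    CMMove WythoffSets ![x, y] q ↔
      (∃ c, 0 < c ∧ c ≤ x ∧ q = ![x - c, y]) ∨
      (∃ c, 0 < c ∧ c ≤ y ∧ q = ![x, y - c]) ∨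
      (∃ c, 0 < c ∧ c ≤ x ∧ c ≤ y ∧ q = ![x - c, y - c]) := by
  constructor
  · rintro ⟨S, hS, -, c, hc, h1, h2⟩
    simp only [WythoffSets, Set.mem_insert_iff, Set.mem_singleton_iff] at hS
    rcases hS with rfl | rfl | rfl
    · left
      obtain ⟨hcx, hq0⟩ := h1 0 (by decide)
      have hq1 := h2 1 (by decide)
      refine ⟨c, hc, by simpa using hcx, ?_⟩
      rw [vec_eta q, hq0, hq1]
      simp
    · right; left
      obtain ⟨hcy, hq1⟩ := h1 1 (by decide)
      have hq0 := h2 0 (by decide)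
      refine ⟨c, hc, by simpa using hcy, ?_⟩
      rw [vec_eta q, hq0, hq1]
      simp
    · right; right
      obtain ⟨hcx, hq0⟩ := h1 0 (by decide)
      obtain ⟨hcy, hq1⟩ := h1 1 (by decide)
      refine ⟨c, hc, by simpa using hcx, by simpa using hcy, ?_⟩
      rw [vec_eta q, hq0, hq1]
      simp
  · rintro (⟨c, hc, hcx, rfl⟩ | ⟨c, hc, hcy, rfl⟩ | ⟨c, hc, hcx, hcy, rfl⟩)
    · exact ⟨{0}, Or.inl rfl, ⟨0, by decide⟩, c, hc, by
        intro i hi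
        fin_cases hi <;> simp [hcx], by
        intro i hi
        fin_cases i
        · simp at hi
        · simp⟩
    · exact ⟨{1}, Or.inr (Or.inl rfl), ⟨1, by decide⟩, c, hc, by
        intro i hi
        fin_cases hi <;> simp [hcy], by
        intro i hi
        fin_cases i
        · simp
        · simp at hi⟩
    · exact ⟨{0, 1}, Or.inr (Or.inr rfl), ⟨0, by decide⟩, c, hc, by
        intro i hi
        fin_cases i <;> simp [hcx, hcy], by
        intro i hi
        fin_cases i <;> simp at hi⟩

lemma wythoff_swap_aux : ∀ s x y : ℕ, x + y ≤ s →
    CMPPos WythoffSets ![x, y] → CMPPos WythoffSets ![y, x] := by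
  intro s
  induction s with
  | zero =>
    intro x y hs h
    have hx : x = 0 := by omega
    have hy : y = 0 := by omega
    subst hx; subst hy; exact h
  | succ s ih =>
    intro x y hs h
    rw [cmppos_iff] at h ⊢
    intro q hq
    rw [vec_eta q] at hq ⊢
    rw [wmove_iff] at hq
    intro hP
    rcases hq with ⟨c, hc, hcy, he⟩ | ⟨c, hc, hcx, he⟩ | ⟨c, hc, hcy, hcx, he⟩
    · rw [he] at hP
      exact h ![x, y - c] (wmove_iff.mpr (.inr (.inl ⟨c, hc, hcy, rfl⟩)))
        (ih (y - c) x (by omega) hP)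
    · rw [he] at hP
      exact h ![x - c, y] (wmove_iff.mpr (.inl ⟨c, hc, hcx, rfl⟩))
        (ih y (x - c) (by omega) hP)
    · rw [he] at hP
      exact h ![x - c, y - c] (wmove_iff.mpr (.inr (.inr ⟨c, hc, hcx, hcy, rfl⟩)))
        (ih (y - c) (x - c) (by omega) hP)

lemma wythoff_swap {x y : ℕ} (h : CMPPos WythoffSets ![x, y]) :
    CMPPos WythoffSets ![y, x] :=
  wythoff_swap_aux (x + y) x y le_rfl h
open Real

noncomputable def wA (n : ℕ) : ℕ := (⌊(n : ℝ) * goldenRatio⌋).toNat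

lemma wA_cast (n : ℕ) : (wA n : ℤ) = ⌊(n : ℝ) * goldenRatio⌋ := by
  rw [wA, Int.toNat_of_nonneg]
  exact Int.floor_nonneg.2 (by positivity)

lemma le_wA (n : ℕ) : n ≤ wA n := by
  have h : ((n:ℤ)) ≤ ⌊(n : ℝ) * goldenRatio⌋ := by
    rw [Int.le_floor]
    push_cast
    nlinarith [one_lt_goldenRatio, Nat.cast_nonneg (α := ℝ) n]
  rw [← wA_cast] at h
  exact_mod_cast h

lemma wA_strictMono : StrictMono wA := by
  intro n m hnm
  have h : (wA n : ℤ) < (wA m : ℤ) := by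
    rw [wA_cast, wA_cast]
    have h1 : (n:ℝ) * goldenRatio + 1 ≤ (m:ℝ) * goldenRatio := by
      have : (n:ℝ) + 1 ≤ m := by exact_mod_cast hnm
      nlinarith [one_lt_goldenRatio]
    calc ⌊(n : ℝ) * goldenRatio⌋ < ⌊(n : ℝ) * goldenRatio⌋ + 1 := by omega
    _ = ⌊(n : ℝ) * goldenRatio + 1⌋ := by rw [Int.floor_add_one]
    _ ≤ ⌊(m : ℝ) * goldenRatio⌋ := Int.floor_le_floor h1
  exact_mod_cast h

lemma gold_conj_exp : goldenRatio.HolderConjugate (goldenRatio + 1) := by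
  rw [Real.holderConjugate_iff]
  constructor
  · exact one_lt_goldenRatio
  · have h0 := goldenRatio_pos
    have h1 : goldenRatio + 1 > 0 := by linarith
    field_simp
    nlinarith [Real.mul_self_sqrt (by norm_num : (5:ℝ) ≥ 0)]

lemma beatty_gold' (k : ℤ) : beattySeq (goldenRatio + 1) k = beattySeq goldenRatio k + k := by
  simp only [beattySeq]
  rw [show (k:ℝ) * (goldenRatio + 1) = (k:ℝ) * goldenRatio + (k:ℤ) by push_cast; ring,
    Int.floor_add_intCast]

lemma beatty_gold_nat (m : ℕ) : beattySeq goldenRatio (m:ℤ) = (wA m : ℤ) := by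
  rw [beattySeq, wA_cast]
  norm_num

lemma wA_or_wB (m : ℕ) (hm : 0 < m) :
    (∃ n, 0 < n ∧ wA n = m) ∨ (∃ n, 0 < n ∧ wA n + n = m) := by
  have E := Irrational.beattySeq_symmDiff_beattySeq_pos gold_conj_exp goldenRatio_irrational
  have hmem := (Set.ext_iff.mp E ((m:ℤ))).mpr (show (0:ℤ) < m by exact_mod_cast hm)
  rw [Set.mem_symmDiff] at hmem
  rcases hmem with ⟨⟨k, hk, hbk⟩, -⟩ | ⟨⟨k, hk, hbk⟩, -⟩
  · left
    refine ⟨k.toNat, by omega, ?_⟩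
    have hkk : ((k.toNat : ℕ) : ℤ) = k := Int.toNat_of_nonneg hk.le
    have : (wA k.toNat : ℤ) = (m : ℤ) := by rw [← beatty_gold_nat, hkk, hbk]
    exact_mod_cast this
  · right
    refine ⟨k.toNat, by omega, ?_⟩
    have hkk : ((k.toNat : ℕ) : ℤ) = k := Int.toNat_of_nonneg hk.le
    rw [beatty_gold'] at hbk
    have : (wA k.toNat : ℤ) + (k.toNat : ℤ) = (m : ℤ) := by
      rw [← beatty_gold_nat, hkk, hbk]
    exact_mod_cast this

lemma wA_ne_wB {n m : ℕ} (hn : 0 < n) (hm : 0 < m) : wA n ≠ wA m + m := by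
  intro heq
  have E := Irrational.beattySeq_symmDiff_beattySeq_pos gold_conj_exp goldenRatio_irrational
  have h1 : (wA n : ℤ) ∈ {x | ∃ k > (0:ℤ), beattySeq goldenRatio k = x} :=
    ⟨(n:ℤ), by exact_mod_cast hn, beatty_gold_nat n⟩
  have h2 : (wA n : ℤ) ∈ {x | ∃ k > (0:ℤ), beattySeq (goldenRatio+1) k = x} := by
    refine ⟨(m:ℤ), by exact_mod_cast hm, ?_⟩
    rw [beatty_gold', beatty_gold_nat]
    exact_mod_cast heq.symm
  have hpos : (0:ℤ) < (wA n : ℤ) := by have := le_wA n; exact_mod_cast by omega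
  have hmem := (Set.ext_iff.mp E ((wA n : ℤ))).mpr hpos
  rw [Set.mem_symmDiff] at hmem
  tauto

lemma wA_zero : wA 0 = 0 := by simp [wA]

lemma wA_pos {n : ℕ} (hn : 0 < n) : 0 < wA n := lt_of_lt_of_le hn (le_wA n)

lemma wA_inj {m n : ℕ} (h : wA m = wA n) : m = n := wA_strictMono.injective h

lemma wB_inj {m n : ℕ} (h : wA m + m = wA n + n) : m = n := by
  rcases lt_trichotomy m n with h' | h' | h'
  · have := wA_strictMono h'; omega
  · exact h'
  · have := wA_strictMono h'; omega

lemma wythoff_char : ∀ s x y : ℕ, x + y ≤ s → x ≤ y →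
    (CMPPos WythoffSets ![x, y] ↔ ∃ n, x = wA n ∧ y = wA n + n) := by
  intro s
  induction s with
  | zero =>
    intro x y hs _
    have hx : x = 0 := by omega
    have hy : y = 0 := by omega
    subst hx; subst hy
    constructor
    · intro _; exact ⟨0, by simp [wA_zero]⟩
    · intro _
      rw [cmppos_iff]
      intro q hq
      rw [wmove_iff] at hq
      rcases hq with ⟨c, hc, hcx, -⟩ | ⟨c, hc, hcx, -⟩ | ⟨c, hc, hcx, -, -⟩ <;> omega
  | succ s ih =>
    intro x y hs hxy
    constructor
    · -- P-position implies pair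
      intro hP
      by_contra hnp
      push_neg at hnp
      rw [cmppos_iff] at hP
      rcases Nat.eq_zero_or_pos x with rfl | hx
      · rcases Nat.eq_zero_or_pos y with rfl | hy
        · exact hnp 0 (by simp [wA_zero]) (by simp [wA_zero])
        · -- move to (0,0)
          refine hP ![0, y - y] (wmove_iff.mpr (.inr (.inl ⟨y, hy, le_rfl, rfl⟩))) ?_
          rw [Nat.sub_self]
          exact (ih 0 0 (by omega) le_rfl).mpr ⟨0, by simp [wA_zero]⟩
      · rcases wA_or_wB x hx with ⟨n, hn, hxA⟩ | ⟨m, hm, hxB⟩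
        · -- x = wA n
          rcases lt_trichotomy y (wA n + n) with hy | hy | hy
          · -- y < wA n + n
            set m := y - x with hmdef
            rcases Nat.eq_zero_or_pos m with hm0 | hmpos
            · -- x = y, move both to (0,0)
              have hxy' : x = y := by omega
              refine hP ![x - x, y - x] (wmove_iff.mpr (.inr (.inr ⟨x, hx, le_rfl, by omega, rfl⟩))) ?_
              rw [Nat.sub_self, hxy', Nat.sub_self]
              exact (ih 0 0 (by omega) le_rfl).mpr ⟨0, by simp [wA_zero]⟩
            · -- 0 < m < n, move both by c = x - wA m
              have hmn : m < n := by omega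
              have hAm : wA m < x := hxA ▸ wA_strictMono hmn
              refine hP ![x - (x - wA m), y - (x - wA m)]
                (wmove_iff.mpr (.inr (.inr ⟨x - wA m, by omega, by omega, by omega, rfl⟩))) ?_
              have e0 : x - (x - wA m) = wA m := by omega
              have e1 : y - (x - wA m) = wA m + m := by omega
              rw [e0, e1]
              exact (ih (wA m) (wA m + m) (by omega) (by omega)).mpr ⟨m, rfl, rfl⟩
          · exact hnp n hxA.symm hy
          · -- y > wA n + n : reduce second pile
            refine hP ![x, y - (y - (wA n + n))]
              (wmove_iff.mpr (.inr (.inl ⟨y - (wA n + n), by omega, by omega, rfl⟩))) ?_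
            have e1 : y - (y - (wA n + n)) = wA n + n := by omega
            rw [e1, ← hxA]
            exact (ih (wA n) (wA n + n) (by omega) (by omega)).mpr ⟨n, rfl, rfl⟩
        · -- x = wA m + m : reduce second pile to wA m, obtaining swapped pair
          have hAm : wA m < x := by omega
          refine hP ![x, y - (y - wA m)]
            (wmove_iff.mpr (.inr (.inl ⟨y - wA m, by omega, by omega, rfl⟩))) ?_
          have e1 : y - (y - wA m) = wA m := by omega
          rw [e1]
          have : CMPPos WythoffSets ![wA m, wA m + m] :=
            (ih (wA m) (wA m + m) (by omega) (by omega)).mpr ⟨m, rfl, rfl⟩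
          rw [← hxB]
          exact wythoff_swap this
    · -- pair implies P-position
      rintro ⟨n, rfl, rfl⟩
      rw [cmppos_iff]
      intro q hq
      rw [wmove_iff] at hq
      intro hPq
      rcases hq with ⟨c, hc, hcx, he⟩ | ⟨c, hc, hcy, he⟩ | ⟨c, hc, hcx, hcy, he⟩
      · -- reduce pile 0
        rw [he] at hPq
        obtain ⟨m, h1, h2⟩ := (ih (wA n - c) (wA n + n) (by omega) (by omega)).mp hPq
        obtain rfl := wB_inj h2.symm
        omega
      · -- reduce pile 1
        rw [he] at hPq
        by_cases hyy : wA n ≤ wA n + n - c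
        · obtain ⟨m, h1, h2⟩ := (ih (wA n) (wA n + n - c) (by omega) hyy).mp hPq
          obtain rfl := wA_inj h1.symm
          omega
        · push_neg at hyy
          have hPq' := wythoff_swap hPq
          obtain ⟨m, h1, h2⟩ := (ih (wA n + n - c) (wA n) (by omega) (by omega)).mp hPq'
          have hn : 0 < n := by
            rcases Nat.eq_zero_or_pos n with rfl | h'
            · rw [wA_zero] at hyy hcy; omega
            · exact h'
          have hm : 0 < m := by
            rcases Nat.eq_zero_or_pos m with rfl | h'
            · rw [wA_zero] at h2
              have := wA_pos hn
              omega
            · exact h'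
          exact wA_ne_wB hn hm h2
      · -- reduce both
        rw [he] at hPq
        obtain ⟨m, h1, h2⟩ := (ih (wA n - c) (wA n + n - c) (by omega) (by omega)).mp hPq
        obtain rfl : m = n := by omega
        omega

lemma wA_fib (j : ℕ) : wA (Nat.fib (2 * j + 1)) = Nat.fib (2 * j + 2) := by
  have key := fib_succ_sub_goldenRatio_mul_fib (2 * j + 1)
  rw [show 2 * j + 1 + 1 = 2 * j + 2 by omega] at key
  have hneg : goldenConj ^ (2 * j + 1) < 0 :=
    Odd.pow_neg ⟨j, by ring⟩ goldenConj_neg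
  have habs : |goldenConj| < 1 :=
    abs_lt.mpr ⟨neg_one_lt_goldenConj, by linarith [goldenConj_neg]⟩
  have habs' : |goldenConj ^ (2 * j + 1)| < 1 := by
    rw [abs_pow]; exact pow_lt_one₀ (abs_nonneg _) habs (by omega)
  have hgt : -1 < goldenConj ^ (2 * j + 1) := (abs_lt.mp habs').1
  have hfl : ⌊(Nat.fib (2 * j + 1) : ℝ) * goldenRatio⌋ = (Nat.fib (2 * j + 2) : ℤ) := by
    rw [Int.floor_eq_iff]
    constructor
    · push_cast
      nlinarith [key]
    · push_cast
      nlinarith [key]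
  have : (wA (Nat.fib (2 * j + 1)) : ℤ) = (Nat.fib (2 * j + 2) : ℤ) := by
    rw [wA_cast, hfl]
  exact_mod_cast this

lemma wythoff_fib_pair (n : ℕ) (hn : 1 ≤ n) :
    CMPPos WythoffSets ![Nat.fib (2 * n), Nat.fib (2 * n + 1)] := by
  obtain ⟨j, rfl⟩ : ∃ j, n = j + 1 := ⟨n - 1, by omega⟩
  have h2 : 2 * (j + 1) = 2 * j + 2 := by ring
  have h3 : 2 * (j + 1) + 1 = 2 * j + 3 := by ring
  rw [h3, h2]
  have hA := wA_fib j
  have hfib : Nat.fib (2 * j + 3) = Nat.fib (2 * j + 2) + Nat.fib (2 * j + 1) := by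
    rw [show 2 * j + 3 = (2 * j + 1) + 2 by ring, Nat.fib_add_two,
      show 2 * j + 1 + 1 = 2 * j + 2 by omega]
    omega
  refine (wythoff_char (Nat.fib (2 * j + 2) + Nat.fib (2 * j + 3)) _ _ le_rfl ?_).mpr
    ⟨Nat.fib (2 * j + 1), hA.symm, by omega⟩
  have := Nat.fib_le_fib_succ (n := 2 * j + 2)
  omega

lemma ppos_unique_col {a b b' : ℕ} (h : CMPPos WythoffSets ![a, b])
    (h' : CMPPos WythoffSets ![a, b']) : b = b' := by
  rcases lt_trichotomy b b' with hlt | heq | hlt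
  · rw [cmppos_iff] at h'
    exact absurd h (by
      have e : b' - (b' - b) = b := by omega
      have := h' ![a, b' - (b' - b)]
        (wmove_iff.mpr (.inr (.inl ⟨b' - b, by omega, by omega, rfl⟩)))
      rwa [e] at this)
  · exact heq
  · rw [cmppos_iff] at h
    exact absurd h' (by
      have e : b - (b - b') = b' := by omega
      have := h ![a, b - (b - b')]
        (wmove_iff.mpr (.inr (.inl ⟨b - b', by omega, by omega, rfl⟩)))
      rwa [e] at this)

lemma ppos_unique_row {a a' b : ℕ} (h : CMPPos WythoffSets ![a, b])
    (h' : CMPPos WythoffSets ![a', b]) : a = a' :=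
  ppos_unique_col (wythoff_swap h) (wythoff_swap h')

lemma fib_helper {a b : ℕ} (h : CMPPos WythoffSets ![a, b]) (ha : 0 < a) (hb : 0 < b)
    {m : ℕ} (hm : a = Nat.fib m) :
    ∃ n : ℕ, 1 ≤ n ∧
      ((a = Nat.fib (2 * n) ∧ b = Nat.fib (2 * n + 1)) ∨
       (a = Nat.fib (2 * n + 1) ∧ b = Nat.fib (2 * n))) := by
  have hm1 : 1 ≤ m := by
    rcases Nat.eq_zero_or_pos m with rfl | h'
    · simp [Nat.fib_zero] at hm; omega
    · exact h'
  rcases Nat.even_or_odd m with ⟨k, hk⟩ | ⟨k, hk⟩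
  · -- m = 2k, k ≥ 1
    have hk1 : 1 ≤ k := by omega
    have hP := wythoff_fib_pair k hk1
    have hb' : b = Nat.fib (2 * k + 1) := by
      refine ppos_unique_col ?_ hP
      rwa [hm, show m = 2 * k by omega] at h
    exact ⟨k, hk1, Or.inl ⟨by rw [hm]; congr 1; omega, hb'⟩⟩
  · -- m = 2k + 1
    rcases Nat.eq_zero_or_pos k with rfl | hk1
    · -- m = 1, fib 1 = fib 2
      have hP := wythoff_fib_pair 1 le_rfl
      have ha2 : a = Nat.fib 2 := by
        rw [hm, show m = 1 by omega, Nat.fib_one, Nat.fib_two]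
      have hb' : b = Nat.fib (2 * 1 + 1) := by
        refine ppos_unique_col ?_ hP
        rwa [ha2, show Nat.fib 2 = Nat.fib (2 * 1) by norm_num] at h
      exact ⟨1, le_rfl, Or.inl ⟨by rw [ha2], hb'⟩⟩
    · have hP := wythoff_fib_pair k hk1
      have ha' : a = Nat.fib (2 * k + 1) := by rw [hm, hk]
      have hb' : b = Nat.fib (2 * k) := by
        refine ppos_unique_row (wythoff_swap ?_) hP
        rwa [ha'] at h
      exact ⟨k, hk1, Or.inr ⟨ha', hb'⟩⟩

theorem wythoff_fib_ppos' :
    (∀ n : ℕ, 1 ≤ n →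
      CMPPos WythoffSets ![Nat.fib (2 * n), Nat.fib (2 * n + 1)]) ∧
    (∀ p : Fin 2 → ℕ, CMPPos WythoffSets p → 0 < p 0 → 0 < p 1 →
      ((∃ m, p 0 = Nat.fib m) ∨ (∃ m, p 1 = Nat.fib m)) →
      ∃ n : ℕ, 1 ≤ n ∧
        ((p 0 = Nat.fib (2 * n) ∧ p 1 = Nat.fib (2 * n + 1)) ∨
         (p 0 = Nat.fib (2 * n + 1) ∧ p 1 = Nat.fib (2 * n)))) := by
  constructor
  · exact wythoff_fib_pair
  · intro p hp h0 h1 hfib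
    rw [vec_eta p] at hp
    rcases hfib with ⟨m, hm⟩ | ⟨m, hm⟩
    · exact fib_helper hp h0 h1 hm
    · obtain ⟨n, hn, hcase⟩ := fib_helper (wythoff_swap hp) h1 h0 hm
      exact ⟨n, hn, hcase.symm.imp (fun ⟨u, v⟩ => ⟨v, u⟩) (fun ⟨u, v⟩ => ⟨v, u⟩)⟩

/-- For every `n ≥ 1`, the pair `(F (2n), F (2n+1))` of consecutive Fibonacci
numbers is a P-position of Wythoff's game, and these are the only P-positions
with both entries positive in which one of the entries is a Fibonacci number
(the two jars being interchangeable). -/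
theorem wythoff_fib_ppos :
    (∀ n : ℕ, 1 ≤ n →
      CMPPos WythoffSets ![Nat.fib (2 * n), Nat.fib (2 * n + 1)]) ∧
    (∀ p : Fin 2 → ℕ, CMPPos WythoffSets p → 0 < p 0 → 0 < p 1 →
      ((∃ m, p 0 = Nat.fib m) ∨ (∃ m, p 1 = Nat.fib m)) →
      ∃ n : ℕ, 1 ≤ n ∧
        ((p 0 = Nat.fib (2 * n) ∧ p 1 = Nat.fib (2 * n + 1)) ∨
         (p 0 = Nat.fib (2 * n + 1) ∧ p 1 = Nat.fib (2 * n)))) := by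
  exact wythoff_fib_ppos'
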